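/- For all real numbers a, b > 0 and p ∈ (1,2], one has (a - b)(a^{p-1} - b^{p-1}) ≤ (a^{p/2} - b^{p/2})^2 ≤ (p^2/(4(p-1))) · (a - b)(a^{p-1} - b^{p-1}). -/

import Mathlib

open intervalIntegral MeasureTheory

private lemma left_ineq (a b p : ℝ) (ha : 0 < a) (hb : 0 < b) (hp1 : 1 < p) :
    (a - b) * (a ^ (p - 1) - b ^ (p - 1)) ≤ (a ^ (p / 2) - b ^ (p / 2)) ^ 2 := by
  have h1 : a ^ (p / 2) * a ^ (p / 2) = a * a ^ (p - 1) := by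
    rw [← Real.rpow_add ha, show p / 2 + p / 2 = 1 + (p - 1) by ring, Real.rpow_add ha,
      Real.rpow_one]
  have h2 : b ^ (p / 2) * b ^ (p / 2) = b * b ^ (p - 1) := by
    rw [← Real.rpow_add hb, show p / 2 + p / 2 = 1 + (p - 1) by ring, Real.rpow_add hb,
      Real.rpow_one]
  have h3 : (a ^ (p / 2) * b ^ (p / 2)) ^ 2 = (a * b ^ (p - 1)) * (b * a ^ (p - 1)) := by
    have : (a ^ (p / 2) * b ^ (p / 2)) ^ 2
        = (a ^ (p/2) * a ^ (p/2)) * (b ^ (p/2) * b ^ (p/2)) := by ring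
    rw [this, h1, h2]; ring
  have hab : 0 ≤ a ^ (p / 2) * b ^ (p / 2) :=
    mul_nonneg (Real.rpow_nonneg ha.le _) (Real.rpow_nonneg hb.le _)
  have hu : 0 < a * b ^ (p - 1) := mul_pos ha (Real.rpow_pos_of_pos hb _)
  have hv : 0 < b * a ^ (p - 1) := mul_pos hb (Real.rpow_pos_of_pos ha _)
  have key : 2 * (a ^ (p / 2) * b ^ (p / 2)) ≤ a * b ^ (p - 1) + b * a ^ (p - 1) := by
    nlinarith [sq_nonneg (a * b ^ (p - 1) - b * a ^ (p - 1)),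
      sq_nonneg (a * b ^ (p-1) + b * a ^ (p-1))]
  nlinarith [key, h1, h2]

private lemma right_ineq (a b p : ℝ) (hb : 0 < b) (hp1 : 1 < p) (hp2 : p ≤ 2)
    (hba : b ≤ a) :
    (a ^ (p / 2) - b ^ (p / 2)) ^ 2 ≤
      p ^ 2 / (4 * (p - 1)) * ((a - b) * (a ^ (p - 1) - b ^ (p - 1))) := by
  rcases eq_or_lt_of_le hba with rfl | hba
  · simp
  have ha : 0 < a := hb.trans hba
  set M : ℝ := ∫ s in b..a, s ^ (p / 2 - 1) with hM
  set S : ℝ := ∫ s in b..a, s ^ (p - 2) with hS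
  have hr1 : (-1 : ℝ) < p / 2 - 1 := by linarith
  have hr2 : (-1 : ℝ) < p - 2 := by linarith
  have hMval : M = (a ^ (p / 2) - b ^ (p / 2)) / (p / 2) := by
    rw [hM, integral_rpow (Or.inl hr1)]
    norm_num
  have hSval : S = (a ^ (p - 1) - b ^ (p - 1)) / (p - 1) := by
    rw [hS, integral_rpow (Or.inl hr2), show p - 2 + 1 = p - 1 by ring]
  have hMpos : 0 ≤ M := by
    rw [hMval]
    have : b ^ (p / 2) ≤ a ^ (p / 2) :=
      Real.rpow_le_rpow hb.le hba.le (by linarith)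
    apply div_nonneg (by linarith) (by linarith)
  have hSpos : 0 < S := by
    rw [hSval]
    have : b ^ (p - 1) < a ^ (p - 1) :=
      Real.rpow_lt_rpow hb.le hba (by linarith)
    apply div_pos (by linarith) (by linarith)
  have hS1 : (0 : ℝ) < a - b := by linarith
  set l : ℝ := Real.sqrt S / Real.sqrt (a - b) with hl
  have hlpos : 0 < l := div_pos (Real.sqrt_pos.2 hSpos) (Real.sqrt_pos.2 hS1)
  have hl2 : l ^ 2 = S / (a - b) := by
    rw [hl, div_pow, Real.sq_sqrt hSpos.le, Real.sq_sqrt hS1.le]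
  have hll : l ^ 2 * (a - b) = S := by
    rw [hl2]; field_simp
  have key : 2 * M ≤ l * (a - b) + S / l := by
    have hint1 : IntervalIntegrable (fun s : ℝ => s ^ (p / 2 - 1)) volume b a :=
      intervalIntegrable_rpow' hr1
    have hint2 : IntervalIntegrable (fun s : ℝ => s ^ (p - 2)) volume b a :=
      intervalIntegrable_rpow' hr2
    have mono : (∫ s in b..a, 2 * s ^ (p / 2 - 1)) ≤
        ∫ s in b..a, (l + l⁻¹ * s ^ (p - 2)) := by
      apply integral_mono_on hba.le (hint1.const_mul 2)
        ((intervalIntegrable_const (c := l)).add (hint2.const_mul l⁻¹))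
      intro s hs
      have hs0 : 0 < s := lt_of_lt_of_le hb hs.1
      have hsq : s ^ (p / 2 - 1) * s ^ (p / 2 - 1) = s ^ (p - 2) := by
        rw [← Real.rpow_add hs0]; ring_nf
      have h4 : (0:ℝ) < l⁻¹ := inv_pos.2 hlpos
      have expand : l + l⁻¹ * s ^ (p - 2) - 2 * s ^ (p / 2 - 1)
          = l⁻¹ * (l - s ^ (p / 2 - 1)) ^ 2 := by
        rw [← hsq]; field_simp; ring
      linarith [mul_nonneg h4.le (sq_nonneg (l - s ^ (p / 2 - 1))), expand]
    rw [intervalIntegral.integral_const_mul, intervalIntegral.integral_add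
      (intervalIntegrable_const (c := l)) (hint2.const_mul l⁻¹),
      intervalIntegral.integral_const_mul, intervalIntegral.integral_const] at mono
    simp only [smul_eq_mul] at mono
    calc 2 * M ≤ (a - b) * l + l⁻¹ * S := mono
      _ = l * (a - b) + S / l := by ring
  have hSdiv : S / l = l * (a - b) := by
    rw [← hll]; field_simp
  have hMle : M ≤ l * (a - b) := by rw [hSdiv] at key; linarith
  have hM2 : M ^ 2 ≤ (a - b) * S := by
    have h5 : M ^ 2 ≤ (l * (a - b)) ^ 2 := pow_le_pow_left₀ hMpos hMle 2
    have h6 : (l * (a - b)) ^ 2 = (a - b) * S := by linear_combination (a - b) * hll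
    linarith
  have hp1' : p - 1 ≠ 0 := ne_of_gt (by linarith)
  have hp0 : (0:ℝ) < p := by linarith
  have hD : a ^ (p / 2) - b ^ (p / 2) = M * (p / 2) := by
    rw [hMval]; field_simp
  have hE : a ^ (p - 1) - b ^ (p - 1) = S * (p - 1) := by
    rw [hSval]; field_simp
  rw [hD, hE]
  calc (M * (p / 2)) ^ 2 = p ^ 2 / 4 * M ^ 2 := by ring
    _ ≤ p ^ 2 / 4 * ((a - b) * S) := by
        apply mul_le_mul_of_nonneg_left hM2 (by positivity)
    _ = p ^ 2 / (4 * (p - 1)) * ((a - b) * (S * (p - 1))) := by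
        field_simp

theorem stmt0 (a b p : ℝ) (ha : 0 < a) (hb : 0 < b) (hp1 : 1 < p) (hp2 : p ≤ 2) :
    (a - b) * (a ^ (p - 1) - b ^ (p - 1)) ≤ (a ^ (p / 2) - b ^ (p / 2)) ^ 2 ∧
    (a ^ (p / 2) - b ^ (p / 2)) ^ 2 ≤
      p ^ 2 / (4 * (p - 1)) * ((a - b) * (a ^ (p - 1) - b ^ (p - 1))) := by
  constructor
  · exact left_ineq a b p ha hb hp1
  · rcases le_total b a with h | h
    · exact right_ineq a b p hb hp1 hp2 h
    · have := right_ineq b a p ha hp1 hp2 h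
      have e1 : (a - b) * (a ^ (p-1) - b ^ (p-1)) = (b - a) * (b ^ (p-1) - a ^ (p-1)) := by ring
      have e2 : (a ^ (p/2) - b ^ (p/2)) ^ 2 = (b ^ (p/2) - a ^ (p/2)) ^ 2 := by ring
      rw [e1, e2]; exact this
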